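/- Under the hypotheses of the algebra-to-existential construction, the left adjoints ∃_f(α) := a_B(f, α) satisfy the Beck–Chevalley condition: for any pullback square with projections g : X → A and g' : X' → A' and morphisms f : A' → A, f' : X' → X, one has ∃_{g'}(P_{f'}(α)) = P_f(∃_g(α)) for all α ∈ P(X). -/

import Mathlib

open CategoryTheory Limits

universe w v u

/-- A primary doctrine: a contravariant assignment of inf-semilattices with top
to objects of `C`, functorial and meet/top-preserving on morphisms. -/
structure PrimaryDoctrine (C : Type u) [Category.{v} C] where
  P : C → Type w
  [instInf : ∀ A, SemilatticeInf (P A)]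
  [instTop : ∀ A, OrderTop (P A)]
  map : ∀ {A B : C}, (A ⟶ B) → P B → P A
  map_id : ∀ (A : C) (α : P A), map (𝟙 A) α = α
  map_comp : ∀ {A B D : C} (f : A ⟶ B) (g : B ⟶ D) (α : P D),
    map (f ≫ g) α = map f (map g α)
  map_mono : ∀ {A B : C} (f : A ⟶ B), Monotone (map f)
  map_top : ∀ {A B : C} (f : A ⟶ B), map f ⊤ = ⊤
  map_inf : ∀ {A B : C} (f : A ⟶ B) (α β : P B), map f (α ⊓ β) = map f α ⊓ map f β

attribute [instance] PrimaryDoctrine.instInf PrimaryDoctrine.instTop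

/-- A class `Λ` of morphisms containing identities, closed under composition,
and closed under (chosen) pullbacks along arbitrary morphisms. -/
structure LambdaClass (C : Type u) [Category.{v} C] where
  mem : ∀ {X Y : C}, (X ⟶ Y) → Prop
  id_mem : ∀ X : C, mem (𝟙 X)
  comp_mem : ∀ {X Y Z : C} {f : X ⟶ Y} {g : Y ⟶ Z}, mem f → mem g → mem (f ≫ g)
  pbObj : ∀ {X Y Z : C} (g : X ⟶ Z), mem g → ∀ _f : Y ⟶ Z, C
  pbFst : ∀ {X Y Z : C} (g : X ⟶ Z) (hg : mem g) (f : Y ⟶ Z), pbObj g hg f ⟶ X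
  pbSnd : ∀ {X Y Z : C} (g : X ⟶ Z) (hg : mem g) (f : Y ⟶ Z), pbObj g hg f ⟶ Y
  isPB : ∀ {X Y Z : C} (g : X ⟶ Z) (hg : mem g) (f : Y ⟶ Z),
    IsPullback (pbFst g hg f) (pbSnd g hg f) g f
  pbSnd_mem : ∀ {X Y Z : C} (g : X ⟶ Z) (hg : mem g) (f : Y ⟶ Z), mem (pbSnd g hg f)

variable {C : Type u} [Category.{v} C]

/-- An element of the fibre `P^∃(A)` of the existential completion:
a pair of a morphism `g : B ⟶ A` in `Λ` and `α ∈ P(B)`. -/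
structure ExEl (P : PrimaryDoctrine C) (L : LambdaClass C) (A : C) where
  B : C
  g : B ⟶ A
  hg : L.mem g
  α : P.P B

variable {P : PrimaryDoctrine C} {L : LambdaClass C}

/-- The preorder on `P^∃(A)`. -/
def ExLe {A : C} (x y : ExEl P L A) : Prop :=
  ∃ w : x.B ⟶ y.B, w ≫ y.g = x.g ∧ x.α ≤ P.map w y.α

/-- Equivalence in the preorder `P^∃(A)`. -/
def ExEquiv {A : C} (x y : ExEl P L A) : Prop := ExLe x y ∧ ExLe y x

/-- The top element `(id_A, ⊤_A)` of `P^∃(A)`. -/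
def topE (P : PrimaryDoctrine C) (L : LambdaClass C) (A : C) : ExEl P L A :=
  ⟨A, 𝟙 A, L.id_mem A, ⊤⟩

/-- Reindexing `P^∃_f` along `f : A ⟶ B`, via the chosen pullback. -/
def reindex {A B : C} (f : A ⟶ B) (y : ExEl P L B) : ExEl P L A :=
  ⟨L.pbObj y.g y.hg f, L.pbSnd y.g y.hg f, L.pbSnd_mem y.g y.hg f,
   P.map (L.pbFst y.g y.hg f) y.α⟩

/-- Binary infimum in `P^∃(A)`, constructed via the chosen pullback. -/
def infE {A : C} (x y : ExEl P L A) : ExEl P L A :=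
  ⟨L.pbObj x.g x.hg y.g, L.pbFst x.g x.hg y.g ≫ x.g,
   (by rw [(L.isPB x.g x.hg y.g).w]
       exact L.comp_mem (L.pbSnd_mem x.g x.hg y.g) y.hg),
   P.map (L.pbFst x.g x.hg y.g) x.α ⊓ P.map (L.pbSnd x.g x.hg y.g) y.α⟩

/-- The left adjoint `∃^e_f` along `f ∈ Λ`, given by post-composition. -/
def existE {A B : C} (f : A ⟶ B) (hf : L.mem f) (x : ExEl P L A) : ExEl P L B :=
  ⟨x.B, x.g ≫ f, L.comp_mem x.hg hf, x.α⟩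

/-- The unit `ι_A : P(A) → P^∃(A)`, `α ↦ (id_A, α)`. -/
def iota (P : PrimaryDoctrine C) (L : LambdaClass C) (A : C) (α : P.P A) : ExEl P L A :=
  ⟨A, 𝟙 A, L.id_mem A, α⟩

/-- For a strict algebra `(P, a)` of the existential-completion monad, the
induced adjoints `∃_f(α) := a(f, α)` satisfy the Beck–Chevalley condition. -/
theorem algebra_beck_chevalley [HasFiniteProducts C]
    (hproj : ∀ A B : C, L.mem (prod.fst : A ⨯ B ⟶ A))
    (a : ∀ A : C, ExEl P L A → P.P A)
    (hmono : ∀ {A : C} (x y : ExEl P L A), ExLe x y → a A x ≤ a A y)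
    (hnat : ∀ {A B : C} (f : A ⟶ B) (x : ExEl P L B),
      P.map f (a B x) = a A (reindex f x))
    (hunit : ∀ {A : C} (α : P.P A), a A (iota P L A α) = α)
    {X' A' X A : C} (g' : X' ⟶ A') (f' : X' ⟶ X) (f : A' ⟶ A) (g : X ⟶ A)
    (hg : L.mem g) (hg' : L.mem g') (hpb : IsPullback g' f' f g) (α : P.P X) :
    a A' ⟨X', g', hg', P.map f' α⟩ = P.map f (a A ⟨X, g, hg, α⟩) := by
  rw [hnat]
  set Q := L.pbObj g hg f
  set p1 := L.pbFst g hg f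
  set p2 := L.pbSnd g hg f
  have hPB := L.isPB g hg f
  have h1 : g' ≫ f = f' ≫ g := hpb.w
  have h2 : p1 ≫ g = p2 ≫ f := hPB.w
  -- lifts between the two pullbacks
  have u := hPB.lift f' g' h1.symm
  have hu1 : hPB.lift f' g' h1.symm ≫ p1 = f' := hPB.lift_fst _ _ _
  have hu2 : hPB.lift f' g' h1.symm ≫ p2 = g' := hPB.lift_snd _ _ _
  have hflip := hpb.flip
  have hv1 : hflip.lift p1 p2 h2 ≫ f' = p1 := hflip.lift_fst _ _ _
  have hv2 : hflip.lift p1 p2 h2 ≫ g' = p2 := hflip.lift_snd _ _ _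
  apply le_antisymm
  · apply hmono
    exact ⟨hPB.lift f' g' h1.symm, hu2, by
      show P.map f' α ≤ P.map _ (P.map p1 α)
      rw [← P.map_comp, hu1]⟩
  · apply hmono
    exact ⟨hflip.lift p1 p2 h2, hv2, by
      show P.map p1 α ≤ P.map _ (P.map f' α)
      exact le_of_eq ((congrArg (fun φ => P.map φ α) hv1).symm.trans (P.map_comp _ _ α))⟩
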